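/- Let R be a commutative ring and I an ideal of R. A power series f ∈ (R,I)⟨X_1,…,X_n⟩ is a unit of the Tate algebra (R,I)⟨X_1,…,X_n⟩ if and only if its constant term f(0) is a unit of R and every coefficient of f − f(0) lies in the radical √I of I. -/

import Mathlib

open MvPowerSeries

/-- Membership in the Tate algebra `(R,I)⟨X_1,…,X_n⟩`: for every `k ≥ 1`, all but finitely
many coefficients lie in `I ^ k`. -/
def TateMem {n : ℕ} {R : Type*} [CommRing R] (I : Ideal R)
    (f : MvPowerSeries (Fin n) R) : Prop :=
  ∀ k : ℕ, 1 ≤ k → {d : Fin n →₀ ℕ | MvPowerSeries.coeff d f ∉ I ^ k}.Finite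

/-- The formal partial derivative of a multivariate power series with respect to `X j`. -/
noncomputable def psDeriv {n : ℕ} {R : Type*} [CommRing R] (j : Fin n)
    (f : MvPowerSeries (Fin n) R) : MvPowerSeries (Fin n) R :=
  fun d => (d j + 1 : ℕ) * MvPowerSeries.coeff (d + Finsupp.single j 1) f

/-- Substitution of the power series `G j` for the variables `X j` in `f`
(the intended use is when each `G j` has zero constant coefficient, in which case
the `finsum` below is a finite sum for each fixed monomial). -/
noncomputable def psSubst {n : ℕ} {R : Type*} [CommRing R]
    (G : Fin n → MvPowerSeries (Fin n) R) (f : MvPowerSeries (Fin n) R) :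
    MvPowerSeries (Fin n) R :=
  fun e => ∑ᶠ d : Fin n →₀ ℕ,
    MvPowerSeries.coeff d f * MvPowerSeries.coeff e (∏ j, G j ^ d j)

/-- `f` is a unit of the Tate algebra `(R,I)⟨X_1,…,X_n⟩`. -/
def TateUnit {n : ℕ} {R : Type*} [CommRing R] (I : Ideal R)
    (f : MvPowerSeries (Fin n) R) : Prop :=
  TateMem I f ∧ ∃ g, TateMem I g ∧ f * g = 1

/-- The Jacobian conjecture `JC(R,n)`. -/
def JC (R : Type*) [CommRing R] (n : ℕ) : Prop :=
  ∀ F : Fin n → MvPolynomial (Fin n) R,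
    IsUnit (Matrix.det (Matrix.of fun i j => MvPolynomial.pderiv j (F i))) →
    ∃ G : Fin n → MvPolynomial (Fin n) R,
      (∀ i, MvPolynomial.bind₁ G (F i) = MvPolynomial.X i) ∧
      (∀ i, MvPolynomial.bind₁ F (G i) = MvPolynomial.X i)

/-- The Tate-Jacobian conjecture `TJC(R,I,n)`. -/
def TJC (R : Type*) [CommRing R] (I : Ideal R) (n : ℕ) : Prop :=
  ∀ F : Fin n → MvPowerSeries (Fin n) R,
    (∀ i, TateMem I (F i)) →
    (∀ i, MvPowerSeries.constantCoeff (σ := Fin n) (R := R) (F i) = 0) →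
    TateUnit I (Matrix.det (Matrix.of fun i j => psDeriv j (F i))) →
    ∃ G : Fin n → MvPowerSeries (Fin n) R,
      (∀ i, TateMem I (G i)) ∧
      (∀ i, MvPowerSeries.constantCoeff (σ := Fin n) (R := R) (G i) = 0) ∧
      (∀ i, psSubst G (F i) = MvPowerSeries.X i) ∧
      (∀ i, psSubst F (G i) = MvPowerSeries.X i)


lemma keyA {n : ℕ} {S : Type*} [CommRing S] [IsDomain S]
    {F G : MvPowerSeries (Fin n) S} (hFG : F * G = 1)
    (hF : {d : Fin n →₀ ℕ | MvPowerSeries.coeff d F ≠ 0}.Finite)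
    (hG : {d : Fin n →₀ ℕ | MvPowerSeries.coeff d G ≠ 0}.Finite)
    {d : Fin n →₀ ℕ} (hd : d ≠ 0) : MvPowerSeries.coeff d F = 0 := by
  by_contra hd0
  have hGne : ∃ e, MvPowerSeries.coeff e G ≠ 0 := by
    by_contra hG0
    push_neg at hG0
    have : G = 0 := by ext e; simpa using hG0 e
    rw [this, mul_zero] at hFG
    exact one_ne_zero hFG.symm
  obtain ⟨e0, he0⟩ := hGne
  have hdSF : d ∈ hF.toFinset := hF.mem_toFinset.mpr hd0
  have he0SG : e0 ∈ hG.toFinset := hG.mem_toFinset.mpr he0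
  obtain ⟨D, hD, hDmax'⟩ := hF.toFinset.exists_max_image (fun u => toLex u) ⟨d, hdSF⟩
  obtain ⟨E, hE, hEmax'⟩ := hG.toFinset.exists_max_image (fun u => toLex u) ⟨e0, he0SG⟩
  have hDmax : ∀ x, MvPowerSeries.coeff x F ≠ 0 → toLex x ≤ toLex D := fun x hx =>
    hDmax' x (hF.mem_toFinset.mpr hx)
  have hEmax : ∀ x, MvPowerSeries.coeff x G ≠ 0 → toLex x ≤ toLex E := fun x hx =>
    hEmax' x (hG.mem_toFinset.mpr hx)
  have hDne : MvPowerSeries.coeff D F ≠ 0 := hF.mem_toFinset.mp hD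
  have hEne : MvPowerSeries.coeff E G ≠ 0 := hG.mem_toFinset.mp hE
  have key : MvPowerSeries.coeff (D + E) (F * G)
      = MvPowerSeries.coeff D F * MvPowerSeries.coeff E G := by
    rw [MvPowerSeries.coeff_mul]
    rw [Finset.sum_eq_single (D, E)]
    · rintro ⟨u, v⟩ hmem hne
      rw [Finset.HasAntidiagonal.mem_antidiagonal] at hmem
      by_contra hterm
      have h1 : toLex u ≤ toLex D := hDmax u (left_ne_zero_of_mul hterm)
      have h2 : toLex v ≤ toLex E := hEmax v (right_ne_zero_of_mul hterm)
      have hsum : toLex u + toLex v = toLex D + toLex E := by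
        exact_mod_cast congrArg toLex hmem
      have huD : toLex u = toLex D := by
        rcases lt_or_eq_of_le h1 with h | h
        · exact absurd hsum (ne_of_lt (add_lt_add_of_lt_of_le h h2))
        · exact h
      have hvE : toLex v = toLex E := by
        rw [huD] at hsum
        exact add_left_cancel hsum
      exact hne (Prod.ext (toLex_inj.mp huD) (toLex_inj.mp hvE))
    · intro hnot
      exfalso; apply hnot; rw [Finset.HasAntidiagonal.mem_antidiagonal]
  rw [hFG] at key
  have hne : MvPowerSeries.coeff D F * MvPowerSeries.coeff E G ≠ 0 :=
    mul_ne_zero hDne hEne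
  have hDE : D + E = 0 := by
    by_contra hne2
    rw [MvPowerSeries.coeff_one, if_neg hne2] at key
    exact hne key.symm
  have hD0 : D = 0 := by
    ext i
    have := DFunLike.congr_fun hDE i
    simp only [Finsupp.add_apply, Finsupp.coe_zero, Pi.zero_apply] at this ⊢
    omega
  have hle : toLex d ≤ toLex D := hDmax d hd0
  rw [hD0] at hle
  have h0d : toLex (0 : Fin n →₀ ℕ) ≤ toLex d := Finsupp.toLex_monotone (show 0 ≤ d from zero_le)
  exact hd (toLex_inj.mp (le_antisymm hle h0d))

section TateLemmas

variable {n : ℕ} {R : Type*} [CommRing R] {I J : Ideal R}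

lemma tateMem_mono (hIJ : I ≤ J) {f : MvPowerSeries (Fin n) R} (hf : TateMem I f) :
    TateMem J f := fun k hk =>
  (hf k hk).subset fun _ hd hmem => hd (Ideal.pow_right_mono hIJ k hmem)

lemma tateMem_C (r : R) : TateMem I (MvPowerSeries.C (σ := Fin n) (R := R) r) := by
  intro k hk
  apply (Set.finite_singleton (0 : Fin n →₀ ℕ)).subset
  intro d hd
  rw [Set.mem_singleton_iff]
  by_contra hne
  apply hd
  rw [MvPowerSeries.coeff_C, if_neg hne]
  exact (I ^ k).zero_mem

lemma tateMem_one : TateMem I (1 : MvPowerSeries (Fin n) R) := by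
  rw [← map_one (MvPowerSeries.C (σ := Fin n) (R := R))]
  exact tateMem_C 1

lemma tateMem_neg {f : MvPowerSeries (Fin n) R} (hf : TateMem I f) : TateMem I (-f) := by
  intro k hk
  apply (hf k hk).subset
  intro d hd hmem
  apply hd
  rw [map_neg]
  exact neg_mem hmem

lemma tateMem_add {f g : MvPowerSeries (Fin n) R} (hf : TateMem I f) (hg : TateMem I g) :
    TateMem I (f + g) := by
  intro k hk
  apply ((hf k hk).union (hg k hk)).subset
  intro d hd
  by_contra hmem
  simp only [Set.mem_union, Set.mem_setOf_eq, not_or, not_not] at hmem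
  apply hd
  rw [map_add]
  exact add_mem hmem.1 hmem.2

lemma tateMem_mul {f g : MvPowerSeries (Fin n) R} (hf : TateMem I f) (hg : TateMem I g) :
    TateMem I (f * g) := by
  intro k hk
  apply (Set.Finite.image2 (· + ·) (hf k hk) (hg k hk)).subset
  intro d hd
  by_contra hd2
  apply hd
  rw [MvPowerSeries.coeff_mul]
  apply Submodule.sum_mem
  rintro ⟨u, v⟩ hmem
  rw [Finset.HasAntidiagonal.mem_antidiagonal] at hmem
  by_cases hu : MvPowerSeries.coeff u f ∈ I ^ k
  · exact Ideal.mul_mem_right _ _ hu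
  · by_cases hv : MvPowerSeries.coeff v g ∈ I ^ k
    · exact Ideal.mul_mem_left _ _ hv
    · exact absurd (Set.mem_image2.mpr ⟨u, hu, v, hv, hmem⟩) hd2

lemma tateMem_sum {m : ℕ} (F : ℕ → MvPowerSeries (Fin n) R)
    (hF : ∀ i, TateMem I (F i)) : TateMem I (∑ i ∈ Finset.range m, F i) := by
  induction m with
  | zero => simpa using tateMem_mono le_rfl (tateMem_C (0 : R)) -- sum over empty = 0
  | succ m ih =>
      rw [Finset.sum_range_succ]
      exact tateMem_add ih (hF m)

lemma tateMem_pow {f : MvPowerSeries (Fin n) R} (hf : TateMem I f) (m : ℕ) :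
    TateMem I (f ^ m) := by
  induction m with
  | zero => rw [pow_zero]; exact tateMem_one
  | succ m ih => rw [pow_succ]; exact tateMem_mul ih hf

lemma coeff_pow_mem {h : MvPowerSeries (Fin n) R}
    (hh : ∀ d, MvPowerSeries.coeff d h ∈ J) (m : ℕ) (d : Fin n →₀ ℕ) :
    MvPowerSeries.coeff d (h ^ m) ∈ J ^ m := by
  induction m generalizing d with
  | zero => simp [Ideal.one_eq_top]
  | succ m ih =>
      rw [pow_succ h m, MvPowerSeries.coeff_mul]
      apply Submodule.sum_mem
      rintro ⟨u, v⟩ _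
      rw [pow_succ J m]
      exact Ideal.mul_mem_mul (ih u) (hh v)

lemma geom_decomp {h g' : MvPowerSeries (Fin n) R} (hg' : (1 - h) * g' = 1) (k : ℕ) :
    g' = (∑ m ∈ Finset.range k, h ^ m) + h ^ k * g' := by
  have h1 : (∑ m ∈ Finset.range k, h ^ m) * (1 - h) = 1 - h ^ k := by
    have := geom_sum_mul h k
    linear_combination -this
  calc g' = ((∑ m ∈ Finset.range k, h ^ m) * (1 - h) + h ^ k) * g' := by
        rw [h1]; ring
    _ = (∑ m ∈ Finset.range k, h ^ m) * ((1 - h) * g') + h ^ k * g' := by ring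
    _ = _ := by rw [hg']; ring

lemma tateMem_inv {h g' : MvPowerSeries (Fin n) R}
    (hh : TateMem J h) (hcoef : ∀ d, MvPowerSeries.coeff d h ∈ J)
    (hg' : (1 - h) * g' = 1) : TateMem J g' := by
  intro k hk
  have hsum : TateMem J (∑ m ∈ Finset.range k, h ^ m) :=
    tateMem_sum _ (fun m => tateMem_pow hh m)
  apply (hsum k hk).subset
  intro d hd
  by_contra hmem
  rw [Set.mem_setOf_eq, not_not] at hmem
  apply hd
  rw [geom_decomp hg' k, map_add]
  refine add_mem hmem ?_
  rw [MvPowerSeries.coeff_mul]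
  apply Submodule.sum_mem
  rintro ⟨u, v⟩ _
  exact Ideal.mul_mem_right _ _ (coeff_pow_mem hcoef k u)

end TateLemmas

/-- A series `f` in the Tate algebra `(R,I)⟨X_1,…,X_n⟩` is a unit of the Tate algebra if and
only if `f(0)` is a unit of `R` and all coefficients of `f - f(0)` lie in `√I`. -/
theorem stmt_5 (R : Type*) [CommRing R] (I : Ideal R) (n : ℕ)
    (f : MvPowerSeries (Fin n) R) (hf : TateMem I f) :
    (∃ g, TateMem I g ∧ f * g = 1) ↔
      IsUnit (MvPowerSeries.constantCoeff (σ := Fin n) (R := R) f) ∧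
      ∀ d : Fin n →₀ ℕ,
        MvPowerSeries.coeff d
          (f - MvPowerSeries.C (σ := Fin n) (R := R) (MvPowerSeries.constantCoeff (σ := Fin n) (R := R) f))
          ∈ I.radical := by
  classical
  constructor
  · rintro ⟨g, hg, hfg⟩
    constructor
    · exact IsUnit.of_mul_eq_one (MvPowerSeries.constantCoeff (σ := Fin n) (R := R) g)
        (by rw [← map_mul, hfg, map_one])
    · intro d
      by_cases hd : d = 0
      · subst hd
        have h0 : MvPowerSeries.coeff 0
            (f - MvPowerSeries.C (σ := Fin n) (R := R) (MvPowerSeries.constantCoeff (σ := Fin n) (R := R) f)) = 0 := by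
          simp
        rw [h0]
        exact Ideal.zero_mem _
      · have hco : MvPowerSeries.coeff d
            (f - MvPowerSeries.C (σ := Fin n) (R := R) (MvPowerSeries.constantCoeff (σ := Fin n) (R := R) f))
            = MvPowerSeries.coeff d f := by
          rw [map_sub, MvPowerSeries.coeff_C, if_neg hd, sub_zero]
        rw [hco, Ideal.radical_eq_sInf]
        apply Submodule.mem_sInf.mpr
        rintro p ⟨hIp, hp⟩
        haveI := hp
        have hmapmul : (MvPowerSeries.map (σ := Fin n) (Ideal.Quotient.mk p) f) *
            (MvPowerSeries.map (σ := Fin n) (Ideal.Quotient.mk p) g) = 1 := by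
          rw [← map_mul, hfg, map_one]
        have hFfin : {e : Fin n →₀ ℕ | MvPowerSeries.coeff e
            (MvPowerSeries.map (σ := Fin n) (Ideal.Quotient.mk p) f) ≠ 0}.Finite := by
          apply (hf 1 le_rfl).subset
          intro e he hmem
          apply he
          rw [pow_one] at hmem
          rw [MvPowerSeries.coeff_map]
          exact Ideal.Quotient.eq_zero_iff_mem.mpr (hIp hmem)
        have hGfin : {e : Fin n →₀ ℕ | MvPowerSeries.coeff e
            (MvPowerSeries.map (σ := Fin n) (Ideal.Quotient.mk p) g) ≠ 0}.Finite := by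
          apply (hg 1 le_rfl).subset
          intro e he hmem
          apply he
          rw [pow_one] at hmem
          rw [MvPowerSeries.coeff_map]
          exact Ideal.Quotient.eq_zero_iff_mem.mpr (hIp hmem)
        have hzero := keyA hmapmul hFfin hGfin hd
        rw [MvPowerSeries.coeff_map] at hzero
        exact Ideal.Quotient.eq_zero_iff_mem.mp hzero
  · rintro ⟨hu, hrad⟩
    obtain ⟨u, hu⟩ := hu
    set c := MvPowerSeries.constantCoeff (σ := Fin n) (R := R) f with hcdef
    set h : MvPowerSeries (Fin n) R :=
      MvPowerSeries.C (σ := Fin n) (R := R) ↑u⁻¹ * (MvPowerSeries.C (σ := Fin n) (R := R) c - f) with hhdef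
    have hcu : (MvPowerSeries.C (σ := Fin n) (R := R) (↑u⁻¹ : R)) * (MvPowerSeries.C (σ := Fin n) (R := R) c) = 1 := by
      rw [← map_mul, ← hu, Units.inv_mul, map_one]
    have hcoef_rad : ∀ d, MvPowerSeries.coeff d h ∈ I.radical := by
      intro d
      rw [hhdef, MvPowerSeries.coeff_C_mul]
      apply Ideal.mul_mem_left
      have hneg : MvPowerSeries.coeff d (MvPowerSeries.C (σ := Fin n) (R := R) c - f)
          = -(MvPowerSeries.coeff d (f - MvPowerSeries.C (σ := Fin n) (R := R) c)) := by
        rw [map_sub, map_sub]; ring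
      rw [hneg]
      exact neg_mem (hrad d)
    have hh_tate : TateMem I h := by
      rw [hhdef, sub_eq_add_neg]
      exact tateMem_mul (tateMem_C _) (tateMem_add (tateMem_C _) (tateMem_neg hf))
    have hconst_h : MvPowerSeries.constantCoeff (σ := Fin n) (R := R) h = 0 := by
      rw [hhdef, map_mul, map_sub]
      simp
      exact sub_eq_zero.mpr hcdef
    set B := (hh_tate 1 le_rfl).toFinset with hB
    set s : Finset R := B.image (fun d => MvPowerSeries.coeff d h) with hs
    have hJ0rad : Ideal.span (↑s : Set R) ≤ I.radical := by
      rw [Ideal.span_le]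
      intro x hx
      rw [Finset.coe_image] at hx
      obtain ⟨d, _, rfl⟩ := hx
      exact hcoef_rad d
    obtain ⟨M, hM⟩ := Ideal.exists_pow_le_of_le_radical_of_fg hJ0rad ⟨s, rfl⟩
    set J : Ideal R := I ⊔ Ideal.span (↑s : Set R) with hJdef
    have hcoefJ : ∀ d, MvPowerSeries.coeff d h ∈ J := by
      intro d
      by_cases hdB : d ∈ B
      · exact Ideal.mem_sup_right (Ideal.subset_span
          (Finset.mem_coe.mpr (Finset.mem_image_of_mem _ hdB)))
      · have hmem : MvPowerSeries.coeff d h ∈ I ^ 1 := by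
          by_contra hnot
          exact hdB ((hh_tate 1 le_rfl).mem_toFinset.mpr hnot)
        rw [pow_one] at hmem
        exact Ideal.mem_sup_left hmem
    have hhJ : TateMem J h := tateMem_mono le_sup_left hh_tate
    have hg'eq : (1 - h) * MvPowerSeries.invOfUnit (1 - h) 1 = 1 :=
      MvPowerSeries.mul_invOfUnit _ 1 (by
        rw [map_sub, hconst_h, map_one, sub_zero, Units.val_one])
    set g' := MvPowerSeries.invOfUnit (1 - h) 1 with hg'def
    have hg'J : TateMem J g' := tateMem_inv hhJ hcoefJ hg'eq
    refine ⟨MvPowerSeries.C (σ := Fin n) (R := R) ↑u⁻¹ * g', ?_, ?_⟩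
    · intro k hk
      have hNk : 1 ≤ k + M * k := le_trans hk (Nat.le_add_right _ _)
      apply (hg'J (k + M * k) hNk).subset
      intro d hd
      by_contra hmem
      rw [Set.mem_setOf_eq, not_not] at hmem
      apply hd
      have hJle : J ^ (k + M * k) ≤ I ^ k := by
        rw [hJdef]
        refine le_trans Ideal.sup_pow_add_le_pow_sup_pow (sup_le le_rfl ?_)
        rw [pow_mul]
        exact Ideal.pow_right_mono hM k
      rw [MvPowerSeries.coeff_C_mul]
      exact Ideal.mul_mem_left _ _ (hJle hmem)
    · have h1 : (1 : MvPowerSeries (Fin n) R) - h = MvPowerSeries.C (σ := Fin n) (R := R) ↑u⁻¹ * f := by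
        rw [hhdef]
        linear_combination -hcu
      calc f * (MvPowerSeries.C (σ := Fin n) (R := R) ↑u⁻¹ * g')
          = (MvPowerSeries.C (σ := Fin n) (R := R) ↑u⁻¹ * f) * g' := by ring
        _ = (1 - h) * g' := by rw [h1]
        _ = 1 := hg'eq
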